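/- arXiv:1607.03645 — 2 statements merged into one kernel-verified Lean document; each statement's English description precedes it below -/
import Mathlib

section
/- Let P be an n×n real matrix with ⟨Px,x⟩ ≥ ⟨x,x⟩ for all x ∈ ℝⁿ, and set A_t = t^P = exp((log t)P) for t > 0. Then for every nonzero x ∈ ℝⁿ, the function t ↦ |A_t x| is strictly increasing on (0,∞). -/
open MeasureTheory Real Set Matrix
open scoped FourierTransform ENNReal NNReal RealInnerProductSpace

noncomputable section

abbrev Euc (n : ℕ) := EuclideanSpace ℝ (Fin n)

variable {n : ℕ}

/-- Action of a matrix on Euclidean space. -/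
def mulVecEuc (P : Matrix (Fin n) (Fin n) ℝ) (x : Euc n) : Euc n :=
  (EuclideanSpace.equiv (Fin n) ℝ).symm (P.mulVec (EuclideanSpace.equiv (Fin n) ℝ x))

/-- The parabolic dilation `A_t = exp((log t) P)` acting on `ℝⁿ`. -/
def Aact (P : Matrix (Fin n) (Fin n) ℝ) (t : ℝ) (x : Euc n) : Euc n :=
  mulVecEuc (NormedSpace.exp ((Real.log t) • P)) x

/-- The hypothesis `⟨Px, x⟩ ≥ ⟨x, x⟩`. -/
def GoodMatrix (P : Matrix (Fin n) (Fin n) ℝ) : Prop :=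
  ∀ x : Euc n, ⟪x, x⟫ ≤ ⟪mulVecEuc P x, x⟫

/-- `ρ` is the norm function associated with the dilations `A_t`:
`ρ 0 = 0` and for `x ≠ 0`, `ρ x` is positive with `|A_{(ρ x)⁻¹} x| = 1`. -/
def IsRho (P : Matrix (Fin n) (Fin n) ℝ) (ρ : Euc n → ℝ) : Prop :=
  ρ 0 = 0 ∧ ∀ x : Euc n, x ≠ 0 → 0 < ρ x ∧ ‖Aact P (ρ x)⁻¹ x‖ = 1

/-- Non-isotropic dilate `φ_t(x) = t^{-γ} φ(A_t^{-1} x)`, `γ = trace P`. -/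
def dil (P : Matrix (Fin n) (Fin n) ℝ) (φ : Euc n → ℂ) (t : ℝ) (x : Euc n) : ℂ :=
  (t ^ (-(P.trace)) : ℝ) • φ (Aact P t⁻¹ x)

/-- Convolution. -/
def conv (f g : Euc n → ℂ) (x : Euc n) : ℂ := ∫ y, f y * g (x - y)

/-- Peetre maximal function relative to `ρ`. -/
def peetre {E : Type*} [NormedAddCommGroup E] (ρ : Euc n → ℝ) (N R : ℝ)
    (F : Euc n → E) (x : Euc n) : ℝ≥0∞ :=
  ⨆ y : Euc n, (‖F (x - y)‖₊ : ℝ≥0∞) / ENNReal.ofReal ((1 + R * ρ y) ^ N)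

/-- Hardy–Littlewood maximal operator relative to the `ρ`-balls. -/
def maxρ {E : Type*} [NormedAddCommGroup E] (ρ : Euc n → ℝ) (f : Euc n → E)
    (x : Euc n) : ℝ≥0∞ :=
  ⨆ (c : Euc n) (r : ℝ) (_ : 0 < r) (_ : ρ (x - c) < r),
    (volume {y : Euc n | ρ (c - y) < r})⁻¹ * ∫⁻ y in {y : Euc n | ρ (c - y) < r}, ‖f y‖₊

/-- Muckenhoupt `A_p` class relative to `ρ`-balls. -/
def IsAp (ρ : Euc n → ℝ) (w : Euc n → ℝ) (p : ℝ) : Prop :=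
  ∃ C : ℝ≥0, ∀ (c : Euc n) (r : ℝ), 0 < r →
    (∫⁻ y in {y : Euc n | ρ (c - y) < r}, ENNReal.ofReal (w y)) *
      (∫⁻ y in {y : Euc n | ρ (c - y) < r}, ENNReal.ofReal (w y ^ (-(1 / (p - 1)))))
        ^ (p - 1)
      ≤ C * (volume {y : Euc n | ρ (c - y) < r}) ^ p



section Aux

attribute [local instance] Matrix.linftyOpNormedRing Matrix.linftyOpNormedAlgebra

lemma mulVecEuc_mul (A B : Matrix (Fin n) (Fin n) ℝ) (x : Euc n) :
    mulVecEuc (A * B) x = mulVecEuc A (mulVecEuc B x) := by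
  simp only [mulVecEuc]; rw [← Matrix.mulVec_mulVec]; rfl

def mulVecL (x : Euc n) : Matrix (Fin n) (Fin n) ℝ →L[ℝ] Euc n :=
  LinearMap.toContinuousLinearMap
  { toFun := fun M => mulVecEuc M x
    map_add' := by intro M N; simp only [mulVecEuc, Matrix.add_mulVec]; rfl
    map_smul' := by intro c M; simp only [mulVecEuc, Matrix.smul_mulVec]; rfl }

lemma hasDerivAt_g (P : Matrix (Fin n) (Fin n) ℝ) (x : Euc n) (s : ℝ) :
    HasDerivAt (fun s : ℝ => mulVecEuc (NormedSpace.exp (s • P)) x)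
      (mulVecEuc (P * NormedSpace.exp (s • P)) x) s := by
  have h := hasDerivAt_exp_smul_const' (𝕂 := ℝ) P s
  have := (mulVecL (n := n) x).hasFDerivAt.comp_hasDerivAt s h
  exact this

lemma g_ne_zero (P : Matrix (Fin n) (Fin n) ℝ) {x : Euc n} (hx : x ≠ 0) (s : ℝ) :
    mulVecEuc (NormedSpace.exp (s • P)) x ≠ 0 := by
  intro h
  obtain ⟨u, hu⟩ := Matrix.isUnit_exp (s • P)
  apply hx
  have h1 : mulVecEuc (1 : Matrix (Fin n) (Fin n) ℝ) x = x := by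
    simp [mulVecEuc, Matrix.one_mulVec]
  calc x = mulVecEuc ((↑u⁻¹ * ↑u : Matrix (Fin n) (Fin n) ℝ)) x := by
        rw [u.inv_mul, h1]
    _ = mulVecEuc (↑u⁻¹) (mulVecEuc (↑u) x) := mulVecEuc_mul _ _ _
    _ = 0 := by rw [hu, h]; simp [mulVecEuc, Matrix.mulVec_zero]

set_option maxHeartbeats 1000000 in
lemma strict_f (P : Matrix (Fin n) (Fin n) ℝ)
    (hP : ∀ y : Euc n, ⟪y, y⟫ ≤ ⟪mulVecEuc P y, y⟫) {x : Euc n} (hx : x ≠ 0) :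
    StrictMono (fun s : ℝ => ⟪mulVecEuc (NormedSpace.exp (s • P)) x,
      mulVecEuc (NormedSpace.exp (s • P)) x⟫) := by
  set g : ℝ → Euc n := fun s => mulVecEuc (NormedSpace.exp (s • P)) x with hg
  apply strictMono_of_deriv_pos
  intro s
  have hd : HasDerivAt (fun s => ⟪g s, g s⟫)
      (⟪g s, mulVecEuc (P * NormedSpace.exp (s • P)) x⟫ +
        ⟪mulVecEuc (P * NormedSpace.exp (s • P)) x, g s⟫) s :=
    (hasDerivAt_g P x s).inner ℝ (hasDerivAt_g P x s)
  rw [hd.deriv]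
  have hPg : mulVecEuc (P * NormedSpace.exp (s • P)) x = mulVecEuc P (g s) :=
    mulVecEuc_mul _ _ _
  rw [hPg]
  have h1 : 0 < ⟪g s, g s⟫ := by
    rw [real_inner_self_eq_norm_sq]
    exact pow_pos (norm_pos_iff.2 (g_ne_zero P hx s)) 2
  have h2 := hP (g s)
  have h3 : ⟪g s, mulVecEuc P (g s)⟫ = ⟪mulVecEuc P (g s), g s⟫ := real_inner_comm _ _
  linarith

end Aux

theorem statement0 (n : ℕ) (P : Matrix (Fin n) (Fin n) ℝ) (hP : GoodMatrix P)
    (x : Euc n) (hx : x ≠ 0) :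
    StrictMonoOn (fun t : ℝ => ‖Aact P t x‖) (Set.Ioi 0) := by
  intro a ha b hb hab
  have hlt : Real.log a < Real.log b := Real.log_lt_log ha hab
  have h := strict_f P hP hx hlt
  simp only at h ⊢
  have h2 : ⟪Aact P a x, Aact P a x⟫ < ⟪Aact P b x, Aact P b x⟫ := h
  rw [real_inner_self_eq_norm_sq, real_inner_self_eq_norm_sq] at h2
  exact lt_of_pow_lt_pow_left₀ 2 (norm_nonneg _) h2
end
end

section
/- The norm function ρ associated with the dilations A_t = t^P satisfies the triangle inequality ρ(x+y) ≤ ρ(x) + ρ(y) for all x, y ∈ ℝⁿ. -/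
set_option synthInstance.maxHeartbeats 1000000
set_option maxHeartbeats 1000000


open MeasureTheory Real Set Matrix
open scoped FourierTransform ENNReal NNReal RealInnerProductSpace

noncomputable section

variable {n : ℕ}

def auxLeqv (n : ℕ) : Matrix (Fin n) (Fin n) ℝ ≃ₗ[ℝ] (Euc n →L[ℝ] Euc n) where
  toFun := Matrix.toEuclideanCLM (𝕜 := ℝ)
  invFun := (Matrix.toEuclideanCLM (𝕜 := ℝ)).symm
  left_inv := (Matrix.toEuclideanCLM (𝕜 := ℝ)).left_inv
  right_inv := (Matrix.toEuclideanCLM (𝕜 := ℝ)).right_inv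
  map_add' := map_add _
  map_smul' := _root_.map_smul _

def auxEqv (n : ℕ) : Matrix (Fin n) (Fin n) ℝ ≃L[ℝ] (Euc n →L[ℝ] Euc n) :=
  LinearEquiv.toContinuousLinearEquiv (auxLeqv n)

theorem aux_clm_exp (M : Matrix (Fin n) (Fin n) ℝ) :
    Matrix.toEuclideanCLM (𝕜 := ℝ) (NormedSpace.exp M) =
      NormedSpace.exp (Matrix.toEuclideanCLM (𝕜 := ℝ) M) := by
  rw [NormedSpace.exp_eq_tsum ℝ, NormedSpace.exp_eq_tsum ℝ]
  have h := (auxEqv n).map_tsum (L := SummationFilter.unconditional ℕ) (f := fun k : ℕ => (k.factorial⁻¹ : ℝ) • M ^ k)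
  rw [show (Matrix.toEuclideanCLM (𝕜 := ℝ)) (∑' k : ℕ, ((k.factorial : ℝ))⁻¹ • M ^ k)
      = auxEqv n (∑' k : ℕ, ((k.factorial : ℝ))⁻¹ • M ^ k) from rfl, h]
  congr 1; ext1 k
  show auxEqv n _ = _
  rw [_root_.map_smul]
  show _ • (Matrix.toEuclideanCLM (𝕜 := ℝ)) (M ^ k) = _
  rw [map_pow]

theorem aux_deriv (L : Euc n →L[ℝ] Euc n) (x : Euc n) (s : ℝ) :
    HasDerivAt (fun s : ℝ => NormedSpace.exp (s • L) x)
      (L (NormedSpace.exp (s • L) x)) s := by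
  have h := hasDerivAt_exp_smul_const' (𝕂 := ℝ) L s
  have h2 := h.clm_apply (hasDerivAt_const s x)
  simpa using h2

theorem aux_contraction (L : Euc n →L[ℝ] Euc n) (hL : ∀ v : Euc n, ⟪v, v⟫ ≤ ⟪L v, v⟫)
    (x : Euc n) (s : ℝ) (hs : s ≤ 0) :
    ‖NormedSpace.exp (s • L) x‖ ≤ Real.exp s * ‖x‖ := by
  set u : ℝ → Euc n := fun s => NormedSpace.exp (s • L) x with hu
  set h : ℝ → ℝ := fun s => Real.exp (-2 * s) * ⟪u s, u s⟫ with hh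
  have hder : ∀ t : ℝ, HasDerivAt h
      (Real.exp (-2 * t) * (2 * ⟪L (u t), u t⟫ - 2 * ⟪u t, u t⟫)) t := by
    intro t
    have h1 : HasDerivAt u (L (u t)) t := aux_deriv L x t
    have h2 : HasDerivAt (fun t => (⟪u t, u t⟫ : ℝ)) (⟪u t, L (u t)⟫ + ⟪L (u t), u t⟫) t :=
      h1.inner ℝ h1
    have h3 : HasDerivAt (fun t => Real.exp (-2 * t)) (Real.exp (-2 * t) * (-2)) t := by
      simpa [Function.comp_def, mul_comm] using (Real.hasDerivAt_exp (-2 * t)).comp t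
        ((hasDerivAt_id t).const_mul (-2))
    have := h3.mul h2
    refine HasDerivAt.congr_deriv this ?_
    rw [real_inner_comm (u t) (L (u t))]
    ring
  have hmono : MonotoneOn h (Set.Iic 0) := by
    apply monotoneOn_of_hasDerivWithinAt_nonneg (convex_Iic 0)
      (fun t _ => (hder t).differentiableAt.continuousAt.continuousWithinAt)
      (f' := fun t => Real.exp (-2 * t) * (2 * ⟪L (u t), u t⟫ - 2 * ⟪u t, u t⟫))
      (fun t _ => (hder t).hasDerivWithinAt)
    intro t _
    have := hL (u t)
    have he : (0:ℝ) < Real.exp (-2 * t) := Real.exp_pos _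
    nlinarith
  have h0 : h s ≤ h 0 := hmono (by simpa using hs) (by simp) hs
  have hu0 : u 0 = x := by
    rw [hu]; simp only []
    rw [show (0:ℝ) • L = 0 from zero_smul ℝ L, NormedSpace.exp_zero]; rfl
  have hexp : Real.exp (-2 * s) * ‖u s‖ ^ 2 ≤ ‖x‖ ^ 2 := by
    have := h0
    rw [hh] at this
    simp only [hu0] at this
    rw [real_inner_self_eq_norm_sq, real_inner_self_eq_norm_sq] at this
    simpa using this
  have h1 : ‖u s‖ ^ 2 ≤ (Real.exp s * ‖x‖) ^ 2 := by
    have he : Real.exp (-2 * s) = (Real.exp s)⁻¹ ^ 2 := by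
      rw [← Real.exp_neg]; rw [← Real.exp_nat_mul]; ring_nf
    have hpos : (0:ℝ) < Real.exp s := Real.exp_pos s
    rw [he] at hexp
    rw [mul_pow]
    calc ‖u s‖ ^ 2 = (Real.exp s) ^ 2 * ((Real.exp s)⁻¹ ^ 2 * ‖u s‖ ^ 2) := by
          field_simp
      _ ≤ (Real.exp s) ^ 2 * ‖x‖ ^ 2 := by
          apply mul_le_mul_of_nonneg_left hexp (by positivity)
  have hn : (0:ℝ) ≤ Real.exp s * ‖x‖ := by positivity
  nlinarith [norm_nonneg (u s), hn]

theorem aux_Aact_eq (P : Matrix (Fin n) (Fin n) ℝ) (t : ℝ) (x : Euc n) :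
    Aact P t x = NormedSpace.exp ((Real.log t) • Matrix.toEuclideanCLM (𝕜 := ℝ) P) x := by
  show Matrix.toEuclideanCLM (𝕜 := ℝ) (NormedSpace.exp ((Real.log t) • P)) x = _
  rw [aux_clm_exp, _root_.map_smul]

theorem aux_Aact_add (P : Matrix (Fin n) (Fin n) ℝ) (t : ℝ) (x y : Euc n) :
    Aact P t (x + y) = Aact P t x + Aact P t y := by
  unfold Aact mulVecEuc
  rw [map_add, Matrix.mulVec_add, map_add]

theorem aux_Aact_comp (P : Matrix (Fin n) (Fin n) ℝ) {t u : ℝ} (ht : 0 < t) (hu : 0 < u)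
    (x : Euc n) : Aact P (t * u) x = Aact P t (Aact P u x) := by
  have h1 : Real.log (t * u) • P = Real.log t • P + Real.log u • P := by
    rw [Real.log_mul ht.ne' hu.ne', add_smul]
  set L := Matrix.toEuclideanCLM (𝕜 := ℝ) P with hL
  have hc : Commute (Real.log t • L) (Real.log u • L) := by
    show _ = _
    ext v
    simp only [ContinuousLinearMap.mul_apply, ContinuousLinearMap.smul_apply,
      ContinuousLinearMap.map_smul, PiLp.smul_apply, smul_eq_mul]
    ring
  show Matrix.toEuclideanCLM (𝕜 := ℝ) (NormedSpace.exp (Real.log (t * u) • P)) x =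
    Matrix.toEuclideanCLM (𝕜 := ℝ) (NormedSpace.exp (Real.log t • P))
      (Matrix.toEuclideanCLM (𝕜 := ℝ) (NormedSpace.exp (Real.log u • P)) x)
  rw [h1, aux_clm_exp, aux_clm_exp, aux_clm_exp, map_add, _root_.map_smul, _root_.map_smul,
    NormedSpace.exp_add_of_commute_of_mem_ball (𝕂 := ℝ) hc
      ((NormedSpace.expSeries_radius_eq_top ℝ (Euc n →L[ℝ] Euc n)).symm ▸ edist_lt_top _ _)
      ((NormedSpace.expSeries_radius_eq_top ℝ (Euc n →L[ℝ] Euc n)).symm ▸ edist_lt_top _ _)]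
  rfl

theorem aux_Aact_norm_le (P : Matrix (Fin n) (Fin n) ℝ) (hP : GoodMatrix P) {t : ℝ}
    (ht0 : 0 < t) (ht1 : t ≤ 1) (x : Euc n) : ‖Aact P t x‖ ≤ t * ‖x‖ := by
  rw [aux_Aact_eq]
  have hs : Real.log t ≤ 0 := Real.log_nonpos ht0.le ht1
  have := aux_contraction (Matrix.toEuclideanCLM (𝕜 := ℝ) P) (fun v => hP v) x _ hs
  rwa [Real.exp_log ht0] at this

theorem statement4 (n : ℕ) (P : Matrix (Fin n) (Fin n) ℝ) (hP : GoodMatrix P)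
    (ρ : Euc n → ℝ) (hρ : IsRho P ρ) :
    ∀ x y : Euc n, ρ (x + y) ≤ ρ x + ρ y := by
  intro x y
  rcases eq_or_ne x 0 with rfl | hx
  · simp [hρ.1]
  rcases eq_or_ne y 0 with rfl | hy
  · simp [hρ.1]
  obtain ⟨ha, hxa⟩ := hρ.2 x hx
  obtain ⟨hb, hyb⟩ := hρ.2 y hy
  set a := ρ x
  set b := ρ y
  have hs : 0 < a + b := by linarith
  rcases eq_or_ne (x + y) 0 with h0 | hz
  · rw [h0, hρ.1]; linarith
  -- key bound
  have key : ∀ (z : Euc n) (c : ℝ), 0 < c → c ≤ a + b → ‖Aact P c⁻¹ z‖ = 1 →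
      ‖Aact P (a + b)⁻¹ z‖ ≤ c / (a + b) := by
    intro z c hc hle h1
    have heq : (a + b)⁻¹ = (c / (a + b)) * c⁻¹ := by field_simp
    rw [heq, aux_Aact_comp P (by positivity) (by positivity)]
    calc ‖Aact P (c / (a+b)) (Aact P c⁻¹ z)‖ ≤ (c / (a+b)) * ‖Aact P c⁻¹ z‖ :=
          aux_Aact_norm_le P hP (by positivity) (by rw [div_le_one hs]; exact hle) _
      _ = c / (a + b) := by rw [h1, mul_one]
  have hsum : ‖Aact P (a + b)⁻¹ (x + y)‖ ≤ 1 := by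
    rw [aux_Aact_add]
    calc ‖Aact P (a+b)⁻¹ x + Aact P (a+b)⁻¹ y‖
        ≤ ‖Aact P (a+b)⁻¹ x‖ + ‖Aact P (a+b)⁻¹ y‖ := norm_add_le _ _
      _ ≤ a / (a + b) + b / (a + b) :=
          add_le_add (key x a ha (by linarith) hxa) (key y b hb (by linarith) hyb)
      _ = 1 := by field_simp
  by_contra hlt
  push_neg at hlt
  obtain ⟨hr, hr1⟩ := hρ.2 (x + y) hz
  set r := ρ (x + y)
  have heq : r⁻¹ = ((a + b) / r) * (a + b)⁻¹ := by field_simp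
  have hlast : ‖Aact P r⁻¹ (x + y)‖ ≤ (a + b) / r * 1 := by
    rw [heq, aux_Aact_comp P (by positivity) (by positivity)]
    calc ‖Aact P ((a+b)/r) (Aact P (a+b)⁻¹ (x+y))‖
        ≤ ((a+b)/r) * ‖Aact P (a+b)⁻¹ (x+y)‖ :=
          aux_Aact_norm_le P hP (by positivity) (by rw [div_le_one hr]; linarith) _
      _ ≤ (a+b)/r * 1 := by
          apply mul_le_mul_of_nonneg_left hsum (by positivity)
  rw [hr1, mul_one] at hlast
  have : (a + b) / r < 1 := by rw [div_lt_one hr]; linarith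
  linarith
end
end
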